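/- Suppose |F| > 2. Let S ⊆ Sub(F^3) consist of 3 lines L_1, L_2, L_3 and 2 planes P_1, P_2 with L_1 ⊆ P_1, L_2 ⊆ P_2, L_1 + L_2 + L_3 = F^3, and L_i ⊄ P_j whenever i ≠ j (for i ∈ {1,2,3}, j ∈ {1,2}). Then S is a GL_3(F)-independent set of 5 elements. -/

import Mathlib

open Matrix Submodule

/-- `S ⊆ Sub(F³)` is `GL₃(F)`-independent if for every `V ∈ S` there is a
`g ∈ GL₃(F)` stabilizing every member of `S \ {V}` but not `V`. -/
def glIndep {F : Type*} [Field F] {n : ℕ} (S : Set (Submodule F (Fin n → F))) : Prop :=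
  ∀ V ∈ S, ∃ g : GL (Fin n) F,
    (∀ U ∈ S \ {V},
      U.map ((g : Matrix (Fin n) (Fin n) F).mulVecLin) = U) ∧
    V.map ((g : Matrix (Fin n) (Fin n) F).mulVecLin) ≠ V

section aux

variable {F : Type*} [Field F] {M : Type*} [AddCommGroup M] [Module F M]

private lemma exists_gl' {n : ℕ} (f g : (Fin n → F) →ₗ[F] (Fin n → F))
    (h1 : f.comp g = LinearMap.id) (h2 : g.comp f = LinearMap.id) :
    ∃ G : GL (Fin n) F, ((G : Matrix (Fin n) (Fin n) F)).mulVecLin = f := by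
  refine ⟨⟨LinearMap.toMatrix' f, LinearMap.toMatrix' g, ?_, ?_⟩, ?_⟩
  · rw [← LinearMap.toMatrix'_comp, h1, LinearMap.toMatrix'_id]
  · rw [← LinearMap.toMatrix'_comp, h2, LinearMap.toMatrix'_id]
  · exact Matrix.toLin'_toMatrix' f

private lemma third_elem (hF : (2 : Cardinal) < Cardinal.mk F) (a b : F) :
    ∃ t : F, t ≠ a ∧ t ≠ b := by
  by_contra h
  push_neg at h
  have hsub : (Set.univ : Set F) ⊆ {a, b} := fun x _ => by
    by_cases hx : x = a
    · exact Or.inl hx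
    · exact Or.inr (h x hx)
  have h2 : Cardinal.mk F ≤ 2 := by
    calc Cardinal.mk F = Cardinal.mk (Set.univ : Set F) := Cardinal.mk_univ.symm
    _ ≤ Cardinal.mk ({a, b} : Set F) := Cardinal.mk_le_mk_of_subset hsub
    _ ≤ 2 := by
        have := Cardinal.mk_insert_le (s := ({b} : Set F)) (a := a)
        refine this.trans ?_
        simp [Cardinal.mk_singleton]
        norm_num
  exact absurd hF (not_lt.2 h2)

private lemma reprP1 (b : Module.Basis (Fin 3) F M) {x : M} (hx : x ∈ span F {b 0, b 1 + b 2}) :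
    b.repr x 1 = b.repr x 2 := by
  rw [mem_span_pair] at hx
  obtain ⟨m, n, rfl⟩ := hx
  simp [Finsupp.single_apply]

private lemma reprP2 (b : Module.Basis (Fin 3) F M) {x : M} (hx : x ∈ span F {b 1, b 0 + b 2}) :
    b.repr x 0 = b.repr x 2 := by
  rw [mem_span_pair] at hx
  obtain ⟨m, n, rfl⟩ := hx
  simp [Finsupp.single_apply]

private lemma reprL (b : Module.Basis (Fin 3) F M) {x : M} (i : Fin 3) (hx : x ∈ span F {b i})
    {j : Fin 3} (hj : j ≠ i) : b.repr x j = 0 := by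
  rw [mem_span_singleton] at hx
  obtain ⟨a, rfl⟩ := hx
  simp [Finsupp.single_apply, hj.symm]

private lemma comp_id_of (b : Module.Basis (Fin 3) F M) (f g : M →ₗ[F] M)
    (h0 : f (g (b 0)) = b 0) (h1 : f (g (b 1)) = b 1) (h2 : f (g (b 2)) = b 2) :
    f.comp g = LinearMap.id := by
  apply b.ext; intro i; fin_cases i
  exacts [h0, h1, h2]

private lemma span_pair_eq_of {x y u v : M} (h1 : u ∈ span F {x, y}) (h2 : v ∈ span F {x, y})
    (h3 : x ∈ span F {u, v}) (h4 : y ∈ span F {u, v}) :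
    span F {u, v} = span F {x, y} := by
  apply le_antisymm <;> rw [span_le] <;> rintro z hz <;>
    rcases hz with rfl | rfl <;> assumption

private lemma line_exists_gen (L : Submodule F (Fin 3 → F)) (hL : Module.finrank F L = 1) :
    ∃ v : Fin 3 → F, v ≠ 0 ∧ L = span F {v} := by
  have : L.IsPrincipal := (Submodule.finrank_le_one_iff_isPrincipal L).1 hL.le
  obtain ⟨v, hv⟩ := this.principal
  refine ⟨v, ?_, hv⟩
  rintro rfl
  rw [span_zero_singleton] at hv
  rw [hv, finrank_bot] at hL
  exact one_ne_zero hL.symm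

private lemma range_triple (x y z : Fin 3 → F) :
    Set.range ![x, y, z] = {x, y, z} := by
  ext w
  constructor
  · rintro ⟨i, rfl⟩
    fin_cases i <;> simp [Matrix.cons_val_zero, Matrix.cons_val_one]
  · rintro (rfl | rfl | rfl)
    exacts [⟨0, rfl⟩, ⟨1, rfl⟩, ⟨2, rfl⟩]

private lemma basis_of_lines (L₁ L₂ L₃ : Submodule F (Fin 3 → F)) (e₁ e₂ e₃ : Fin 3 → F)
    (hL1 : L₁ = span F {e₁}) (hL2 : L₂ = span F {e₂}) (hL3 : L₃ = span F {e₃})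
    (hspan : L₁ ⊔ L₂ ⊔ L₃ = ⊤) {c d : F} (hc : c ≠ 0) (hd : d ≠ 0) :
    ∃ b : Module.Basis (Fin 3) F (Fin 3 → F), ⇑b = ![c • e₁, d • e₂, (c*d) • e₃] := by
  have hsp : ⊤ ≤ span F (Set.range ![c • e₁, d • e₂, (c*d) • e₃]) := by
    rw [range_triple, ← hspan, hL1, hL2, hL3]
    rw [Set.insert_eq, Set.insert_eq, span_union, span_union]
    rw [span_singleton_smul_eq hc.isUnit, span_singleton_smul_eq hd.isUnit,
      span_singleton_smul_eq (mul_ne_zero hc hd).isUnit, sup_assoc]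
  have hcard : Fintype.card (Fin 3) = Module.finrank F (Fin 3 → F) := by simp
  exact ⟨basisOfTopLeSpanOfCardEqFinrank _ hsp hcard,
    coe_basisOfTopLeSpanOfCardEqFinrank _ hsp hcard⟩

/-- extract the normalizing scalar for a plane `P` containing the line spanned by `e i₀`
but not the lines spanned by the other two basis vectors. -/
private lemma plane_scalar (b : Module.Basis (Fin 3) F (Fin 3 → F)) (P : Submodule F (Fin 3 → F))
    (hP2 : Module.finrank F P = 2)
    (h0 : b 0 ∈ P) (h1 : b 1 ∉ P) (h2 : b 2 ∉ P) :
    ∃ c : F, c ≠ 0 ∧ b 1 + c • b 2 ∈ P := by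
  have hLP : span F {b 0} < P := by
    refine lt_of_le_of_ne ((span_singleton_le_iff_mem _ _).2 h0) (fun h => ?_)
    have : Module.finrank F (span F {b 0}) = 1 := finrank_span_singleton (b.ne_zero 0)
    rw [h, hP2] at this; omega
  obtain ⟨x, hxP, hxL⟩ := SetLike.exists_of_lt hLP
  set α := b.repr x 0 with hα
  set β := b.repr x 1 with hβdef
  set γ := b.repr x 2 with hγdef
  have hx3 : x = α • b 0 + β • b 1 + γ • b 2 := by
    have := b.sum_repr x
    rw [Fin.sum_univ_three] at this
    exact this.symm
  have hu : β • b 1 + γ • b 2 ∈ P := by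
    have h' := P.sub_mem hxP (P.smul_mem α h0)
    have heq : β • b 1 + γ • b 2 = x - α • b 0 := by rw [hx3]; module
    rw [heq]; exact h'
  have hβ : β ≠ 0 := by
    intro h
    rw [h, zero_smul, zero_add] at hu
    by_cases hγ : γ = 0
    · apply hxL
      rw [hx3, h, hγ, zero_smul, zero_smul, add_zero, add_zero]
      exact smul_mem _ _ (mem_span_singleton_self _)
    · apply h2
      have := P.smul_mem γ⁻¹ hu
      rwa [smul_smul, inv_mul_cancel₀ hγ, one_smul] at this
  have hγ : γ ≠ 0 := by
    intro h
    rw [h, zero_smul, add_zero] at hu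
    apply h1
    have := P.smul_mem β⁻¹ hu
    rwa [smul_smul, inv_mul_cancel₀ hβ, one_smul] at this
  refine ⟨β⁻¹ * γ, mul_ne_zero (inv_ne_zero hβ) hγ, ?_⟩
  have := P.smul_mem β⁻¹ hu
  rwa [smul_add, smul_smul, smul_smul, inv_mul_cancel₀ hβ, one_smul] at this

private lemma plane_scalar' (b : Module.Basis (Fin 3) F (Fin 3 → F)) (P : Submodule F (Fin 3 → F))
    (hP2 : Module.finrank F P = 2)
    (h0 : b 1 ∈ P) (h1 : b 0 ∉ P) (h2 : b 2 ∉ P) :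
    ∃ c : F, c ≠ 0 ∧ b 0 + c • b 2 ∈ P := by
  have hLP : span F {b 1} < P := by
    refine lt_of_le_of_ne ((span_singleton_le_iff_mem _ _).2 h0) (fun h => ?_)
    have : Module.finrank F (span F {b 1}) = 1 := finrank_span_singleton (b.ne_zero 1)
    rw [h, hP2] at this; omega
  obtain ⟨x, hxP, hxL⟩ := SetLike.exists_of_lt hLP
  set α := b.repr x 0 with hα
  set β := b.repr x 1 with hβdef
  set γ := b.repr x 2 with hγdef
  have hx3 : x = α • b 0 + β • b 1 + γ • b 2 := by
    have := b.sum_repr x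
    rw [Fin.sum_univ_three] at this
    exact this.symm
  have hu : α • b 0 + γ • b 2 ∈ P := by
    have h' := P.sub_mem hxP (P.smul_mem β h0)
    have heq : α • b 0 + γ • b 2 = x - β • b 1 := by rw [hx3]; module
    rw [heq]; exact h'
  have hβ : α ≠ 0 := by
    intro h
    rw [h, zero_smul, zero_add] at hu
    by_cases hγ : γ = 0
    · apply hxL
      rw [hx3, h, hγ, zero_smul, zero_smul, add_zero, zero_add]
      exact smul_mem _ _ (mem_span_singleton_self _)
    · apply h2
      have := P.smul_mem γ⁻¹ hu
      rwa [smul_smul, inv_mul_cancel₀ hγ, one_smul] at this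
  have hγ : γ ≠ 0 := by
    intro h
    rw [h, zero_smul, add_zero] at hu
    apply h1
    have := P.smul_mem α⁻¹ hu
    rwa [smul_smul, inv_mul_cancel₀ hβ, one_smul] at this
  refine ⟨α⁻¹ * γ, mul_ne_zero (inv_ne_zero hβ) hγ, ?_⟩
  have := P.smul_mem α⁻¹ hu
  rwa [smul_add, smul_smul, smul_smul, inv_mul_cancel₀ hβ, one_smul] at this

private lemma plane_eq_span (b : Module.Basis (Fin 3) F (Fin 3 → F)) (P : Submodule F (Fin 3 → F))
    (h0 : b 0 ∈ P) (hw : b 1 + b 2 ∈ P) (h1 : b 1 ∉ P) :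
    P = span F {b 0, b 1 + b 2} := by
  refine le_antisymm ?_ (span_le.2 ?_)
  · intro x hx
    set α := b.repr x 0 with hα
    set β := b.repr x 1 with hβdef
    set γ := b.repr x 2 with hγdef
    have hx3 : x = α • b 0 + β • b 1 + γ • b 2 := by
      have := b.sum_repr x
      rw [Fin.sum_univ_three] at this
      exact this.symm
    have key : (β - γ) • b 1 ∈ P := by
      have h' := P.sub_mem (P.sub_mem hx (P.smul_mem α h0)) (P.smul_mem γ hw)
      have heq : (β - γ) • b 1 = x - α • b 0 - γ • (b 1 + b 2) := by rw [hx3]; module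
      rw [heq]; exact h'
    by_cases hβγ : β = γ
    · rw [mem_span_pair]
      exact ⟨α, γ, by rw [hx3, hβγ]; module⟩
    · exfalso; apply h1
      have := P.smul_mem (β - γ)⁻¹ key
      rwa [smul_smul, inv_mul_cancel₀ (sub_ne_zero.2 hβγ), one_smul] at this
  · rintro z (rfl | rfl)
    exacts [h0, hw]

private lemma plane_eq_span' (b : Module.Basis (Fin 3) F (Fin 3 → F)) (P : Submodule F (Fin 3 → F))
    (h1 : b 1 ∈ P) (hw : b 0 + b 2 ∈ P) (h0 : b 0 ∉ P) :
    P = span F {b 1, b 0 + b 2} := by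
  refine le_antisymm ?_ (span_le.2 ?_)
  · intro x hx
    set α := b.repr x 0 with hα
    set β := b.repr x 1 with hβdef
    set γ := b.repr x 2 with hγdef
    have hx3 : x = α • b 0 + β • b 1 + γ • b 2 := by
      have := b.sum_repr x
      rw [Fin.sum_univ_three] at this
      exact this.symm
    have key : (α - γ) • b 0 ∈ P := by
      have h' := P.sub_mem (P.sub_mem hx (P.smul_mem β h1)) (P.smul_mem γ hw)
      have heq : (α - γ) • b 0 = x - β • b 1 - γ • (b 0 + b 2) := by rw [hx3]; module
      rw [heq]; exact h'
    by_cases hβγ : α = γ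
    · rw [mem_span_pair]
      exact ⟨β, γ, by rw [hx3, hβγ]; module⟩
    · exfalso; apply h0
      have := P.smul_mem (α - γ)⁻¹ key
      rwa [smul_smul, inv_mul_cancel₀ (sub_ne_zero.2 hβγ), one_smul] at this
  · rintro z (rfl | rfl)
    exacts [h1, hw]

end aux

set_option maxHeartbeats 1600000 in
theorem stmt_18 (F : Type*) [Field F] (hF : (2 : Cardinal) < Cardinal.mk F)
    (L₁ L₂ L₃ P₁ P₂ : Submodule F (Fin 3 → F))
    (hL : Module.finrank F L₁ = 1 ∧ Module.finrank F L₂ = 1 ∧ Module.finrank F L₃ = 1)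
    (hP : Module.finrank F P₁ = 2 ∧ Module.finrank F P₂ = 2)
    (h₁ : L₁ ≤ P₁) (h₂ : L₂ ≤ P₂)
    (hspan : L₁ ⊔ L₂ ⊔ L₃ = ⊤)
    (h₁₂ : ¬ L₁ ≤ P₂) (h₂₁ : ¬ L₂ ≤ P₁)
    (h₃₁ : ¬ L₃ ≤ P₁) (h₃₂ : ¬ L₃ ≤ P₂) :
    glIndep {L₁, L₂, L₃, P₁, P₂} ∧ ({L₁, L₂, L₃, P₁, P₂} : Set (Submodule F (Fin 3 → F))).ncard = 5 := by
  obtain ⟨hL₁r, hL₂r, hL₃r⟩ := hL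
  obtain ⟨hP₁r, hP₂r⟩ := hP
  obtain ⟨e₁, he₁, hL1⟩ := line_exists_gen L₁ hL₁r
  obtain ⟨e₂, he₂, hL2⟩ := line_exists_gen L₂ hL₂r
  obtain ⟨e₃, he₃, hL3⟩ := line_exists_gen L₃ hL₃r
  have he₁P : e₁ ∈ P₁ := h₁ (hL1 ▸ mem_span_singleton_self e₁)
  have he₂P : e₂ ∈ P₂ := h₂ (hL2 ▸ mem_span_singleton_self e₂)
  have he₂P1 : e₂ ∉ P₁ := fun h => h₂₁ (hL2 ▸ (span_singleton_le_iff_mem _ _).2 h)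
  have he₃P1 : e₃ ∉ P₁ := fun h => h₃₁ (hL3 ▸ (span_singleton_le_iff_mem _ _).2 h)
  have he₁P2 : e₁ ∉ P₂ := fun h => h₁₂ (hL1 ▸ (span_singleton_le_iff_mem _ _).2 h)
  have he₃P2 : e₃ ∉ P₂ := fun h => h₃₂ (hL3 ▸ (span_singleton_le_iff_mem _ _).2 h)
  -- preliminary basis
  obtain ⟨b', hb'⟩ := basis_of_lines L₁ L₂ L₃ e₁ e₂ e₃ hL1 hL2 hL3 hspan one_ne_zero one_ne_zero
  have hb'0 : b' 0 = e₁ := by rw [hb']; simp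
  have hb'1 : b' 1 = e₂ := by rw [hb']; simp
  have hb'2 : b' 2 = e₃ := by rw [hb']; simp
  obtain ⟨c, hc, hcP⟩ := plane_scalar b' P₁ hP₁r (hb'0 ▸ he₁P) (hb'1 ▸ he₂P1) (hb'2 ▸ he₃P1)
  rw [hb'1, hb'2] at hcP
  obtain ⟨d, hd, hdP⟩ := plane_scalar' b' P₂ hP₂r (hb'1 ▸ he₂P) (hb'0 ▸ he₁P2) (hb'2 ▸ he₃P2)
  rw [hb'0, hb'2] at hdP
  -- the adapted basis
  obtain ⟨b, hb⟩ := basis_of_lines L₁ L₂ L₃ e₁ e₂ e₃ hL1 hL2 hL3 hspan hc hd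
  have hb0 : b 0 = c • e₁ := by rw [hb]; simp
  have hb1 : b 1 = d • e₂ := by rw [hb]; simp
  have hb2 : b 2 = (c * d) • e₃ := by rw [hb]; simp
  have hL1' : L₁ = span F {b 0} := by
    rw [hb0, span_singleton_smul_eq hc.isUnit]; exact hL1
  have hL2' : L₂ = span F {b 1} := by
    rw [hb1, span_singleton_smul_eq hd.isUnit]; exact hL2
  have hL3' : L₃ = span F {b 2} := by
    rw [hb2, span_singleton_smul_eq (mul_ne_zero hc hd).isUnit]; exact hL3
  have hb0P1 : b 0 ∈ P₁ := by rw [hb0]; exact P₁.smul_mem _ he₁P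
  have hb1P2 : b 1 ∈ P₂ := by rw [hb1]; exact P₂.smul_mem _ he₂P
  have hwP1 : b 1 + b 2 ∈ P₁ := by
    rw [hb1, hb2]
    have h := P₁.smul_mem d hcP
    rw [smul_add, smul_smul, mul_comm d c] at h
    exact h
  have hwP2 : b 0 + b 2 ∈ P₂ := by
    rw [hb0, hb2]
    have h := P₂.smul_mem c hdP
    rw [smul_add, smul_smul] at h
    exact h
  have hb1nP1 : b 1 ∉ P₁ := fun h => he₂P1 (by
    have h' := P₁.smul_mem d⁻¹ h
    rwa [hb1, smul_smul, inv_mul_cancel₀ hd, one_smul] at h')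
  have hb0nP2 : b 0 ∉ P₂ := fun h => he₁P2 (by
    have h' := P₂.smul_mem c⁻¹ h
    rwa [hb0, smul_smul, inv_mul_cancel₀ hc, one_smul] at h')
  have hP1' : P₁ = span F {b 0, b 1 + b 2} := plane_eq_span b P₁ hb0P1 hwP1 hb1nP1
  have hP2' : P₂ = span F {b 1, b 0 + b 2} := plane_eq_span' b P₂ hb1P2 hwP2 hb0nP2
  -- special scalars
  obtain ⟨t, ht0, ht1⟩ := third_elem hF 0 1
  obtain ⟨s, hs0, hsm⟩ := third_elem hF 0 (-1)
  have hs1 : s + 1 ≠ 0 := fun h => hsm (eq_neg_of_add_eq_zero_left h)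
  -- distinctness
  have d12 : L₁ ≠ L₂ := fun h => h₂₁ (h ▸ h₁)
  have d13 : L₁ ≠ L₃ := fun h => h₃₁ (h ▸ h₁)
  have d23 : L₂ ≠ L₃ := fun h => h₃₂ (h ▸ h₂)
  have dLP : ∀ L P : Submodule F (Fin 3 → F),
      Module.finrank F L = 1 → Module.finrank F P = 2 → L ≠ P := by
    intro L P hl hp h; rw [h, hp] at hl; omega
  have dP : P₁ ≠ P₂ := fun h => h₁₂ (h ▸ h₁)
  constructor
  · intro V hV
    simp only [Set.mem_insert_iff, Set.mem_singleton_iff] at hV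
    rcases hV with rfl | rfl | rfl | rfl | rfl
    · -- move L₁
      obtain ⟨G, hG⟩ := exists_gl' (b.constr F ![(s+1) • b 0 + s • b 1 + s • b 2, b 1, b 2])
        (b.constr F ![(s+1)⁻¹ • b 0 + (-((s+1)⁻¹ * s)) • b 1 + (-((s+1)⁻¹ * s)) • b 2, b 1, b 2])
        (by apply comp_id_of b <;>
          simp only [Module.Basis.constr_basis, map_add, _root_.map_smul, Matrix.cons_val_zero,
            Matrix.cons_val_one, Matrix.head_cons, Matrix.cons_val_two, Matrix.tail_cons] <;>
          match_scalars <;> field_simp <;> ring)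
        (by apply comp_id_of b <;>
          simp only [Module.Basis.constr_basis, map_add, _root_.map_smul, Matrix.cons_val_zero,
            Matrix.cons_val_one, Matrix.head_cons, Matrix.cons_val_two, Matrix.tail_cons] <;>
          match_scalars <;> field_simp <;> ring)
      set f := b.constr F ![(s+1) • b 0 + s • b 1 + s • b 2, b 1, b 2] with hfdef
      have hf0 : f (b 0) = (s+1) • b 0 + s • b 1 + s • b 2 := by
        rw [hfdef]; simp [Module.Basis.constr_basis]
      have hf1 : f (b 1) = b 1 := by rw [hfdef]; simp [Module.Basis.constr_basis]
      have hf2 : f (b 2) = b 2 := by rw [hfdef]; simp [Module.Basis.constr_basis]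
      have hfw1 : f (b 1 + b 2) = b 1 + b 2 := by rw [map_add, hf1, hf2]
      have hfw2 : f (b 0 + b 2) = (s+1) • b 0 + s • b 1 + (s+1) • b 2 := by
        rw [map_add, hf0, hf2]; module
      refine ⟨G, ?_, ?_⟩
      · rintro U ⟨hU, hUne⟩
        rw [hG]
        simp only [Set.mem_insert_iff, Set.mem_singleton_iff] at hU
        rcases hU with rfl | rfl | rfl | rfl | rfl
        · exact absurd (Set.mem_singleton U) hUne
        · rw [hL2', Submodule.map_span, Set.image_singleton, hf1]
        · rw [hL3', Submodule.map_span, Set.image_singleton, hf2]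
        · rw [hP1', Submodule.map_span, Set.image_pair, hf0, hfw1]
          refine span_pair_eq_of (mem_span_pair.2 ⟨s+1, s, by module⟩)
            (mem_span_pair.2 ⟨0, 1, by module⟩)
            (mem_span_pair.2 ⟨(s+1)⁻¹, -((s+1)⁻¹ * s), by match_scalars <;> field_simp <;> ring⟩)
            (mem_span_pair.2 ⟨0, 1, by module⟩)
        · rw [hP2', Submodule.map_span, Set.image_pair, hf1, hfw2]
          refine span_pair_eq_of (mem_span_pair.2 ⟨1, 0, by module⟩)
            (mem_span_pair.2 ⟨s, s+1, by module⟩)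
            (mem_span_pair.2 ⟨1, 0, by module⟩)
            (mem_span_pair.2 ⟨-((s+1)⁻¹ * s), (s+1)⁻¹, by match_scalars <;> field_simp <;> ring⟩)
      · rw [hG, hL1', Submodule.map_span, Set.image_singleton, hf0]
        intro hEq
        have hm : (s+1) • b 0 + s • b 1 + s • b 2 ∈ span F {b 0} :=
          hEq ▸ mem_span_singleton_self _
        have hr := reprL b 0 hm (show (1 : Fin 3) ≠ 0 by decide)
        simp [map_add, _root_.map_smul, Module.Basis.repr_self, Finsupp.single_apply] at hr
        exact hs0 hr
    · -- move L₂
      obtain ⟨G, hG⟩ := exists_gl' (b.constr F ![b 0, s • b 0 + (s+1) • b 1 + s • b 2, b 2])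
        (b.constr F ![b 0, (-((s+1)⁻¹ * s)) • b 0 + (s+1)⁻¹ • b 1 + (-((s+1)⁻¹ * s)) • b 2, b 2])
        (by apply comp_id_of b <;>
          simp only [Module.Basis.constr_basis, map_add, _root_.map_smul, Matrix.cons_val_zero,
            Matrix.cons_val_one, Matrix.head_cons, Matrix.cons_val_two, Matrix.tail_cons] <;>
          match_scalars <;> field_simp <;> ring)
        (by apply comp_id_of b <;>
          simp only [Module.Basis.constr_basis, map_add, _root_.map_smul, Matrix.cons_val_zero,
            Matrix.cons_val_one, Matrix.head_cons, Matrix.cons_val_two, Matrix.tail_cons] <;>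
          match_scalars <;> field_simp <;> ring)
      set f := b.constr F ![b 0, s • b 0 + (s+1) • b 1 + s • b 2, b 2] with hfdef
      have hf0 : f (b 0) = b 0 := by rw [hfdef]; simp [Module.Basis.constr_basis]
      have hf1 : f (b 1) = s • b 0 + (s+1) • b 1 + s • b 2 := by
        rw [hfdef]; simp [Module.Basis.constr_basis]
      have hf2 : f (b 2) = b 2 := by rw [hfdef]; simp [Module.Basis.constr_basis]
      have hfw1 : f (b 1 + b 2) = s • b 0 + (s+1) • b 1 + (s+1) • b 2 := by
        rw [map_add, hf1, hf2]; module
      have hfw2 : f (b 0 + b 2) = b 0 + b 2 := by rw [map_add, hf0, hf2]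
      refine ⟨G, ?_, ?_⟩
      · rintro U ⟨hU, hUne⟩
        rw [hG]
        simp only [Set.mem_insert_iff, Set.mem_singleton_iff] at hU
        rcases hU with rfl | rfl | rfl | rfl | rfl
        · rw [hL1', Submodule.map_span, Set.image_singleton, hf0]
        · exact absurd (Set.mem_singleton U) hUne
        · rw [hL3', Submodule.map_span, Set.image_singleton, hf2]
        · rw [hP1', Submodule.map_span, Set.image_pair, hf0, hfw1]
          refine span_pair_eq_of (mem_span_pair.2 ⟨1, 0, by module⟩)
            (mem_span_pair.2 ⟨s, s+1, by module⟩)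
            (mem_span_pair.2 ⟨1, 0, by module⟩)
            (mem_span_pair.2 ⟨-((s+1)⁻¹ * s), (s+1)⁻¹, by match_scalars <;> field_simp <;> ring⟩)
        · rw [hP2', Submodule.map_span, Set.image_pair, hf1, hfw2]
          refine span_pair_eq_of (mem_span_pair.2 ⟨s+1, s, by module⟩)
            (mem_span_pair.2 ⟨0, 1, by module⟩)
            (mem_span_pair.2 ⟨(s+1)⁻¹, -((s+1)⁻¹ * s), by match_scalars <;> field_simp <;> ring⟩)
            (mem_span_pair.2 ⟨0, 1, by module⟩)
      · rw [hG, hL2', Submodule.map_span, Set.image_singleton, hf1]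
        intro hEq
        have hm : s • b 0 + (s+1) • b 1 + s • b 2 ∈ span F {b 1} :=
          hEq ▸ mem_span_singleton_self _
        have hr := reprL b 1 hm (show (0 : Fin 3) ≠ 1 by decide)
        simp [map_add, _root_.map_smul, Module.Basis.repr_self, Finsupp.single_apply] at hr
        exact hs0 hr
    · -- move L₃
      obtain ⟨G, hG⟩ := exists_gl' (b.constr F ![t • b 0, b 1, (1-t) • b 0 + b 2])
        (b.constr F ![t⁻¹ • b 0, b 1, (-(t⁻¹ * (1-t))) • b 0 + b 2])
        (by apply comp_id_of b <;>
          simp only [Module.Basis.constr_basis, map_add, _root_.map_smul, Matrix.cons_val_zero,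
            Matrix.cons_val_one, Matrix.head_cons, Matrix.cons_val_two, Matrix.tail_cons] <;>
          match_scalars <;> field_simp <;> ring)
        (by apply comp_id_of b <;>
          simp only [Module.Basis.constr_basis, map_add, _root_.map_smul, Matrix.cons_val_zero,
            Matrix.cons_val_one, Matrix.head_cons, Matrix.cons_val_two, Matrix.tail_cons] <;>
          match_scalars <;> field_simp <;> ring)
      set f := b.constr F ![t • b 0, b 1, (1-t) • b 0 + b 2] with hfdef
      have hf0 : f (b 0) = t • b 0 := by rw [hfdef]; simp [Module.Basis.constr_basis]
      have hf1 : f (b 1) = b 1 := by rw [hfdef]; simp [Module.Basis.constr_basis]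
      have hf2 : f (b 2) = (1-t) • b 0 + b 2 := by rw [hfdef]; simp [Module.Basis.constr_basis]
      have hfw1 : f (b 1 + b 2) = (1-t) • b 0 + b 1 + b 2 := by
        rw [map_add, hf1, hf2]; module
      have hfw2 : f (b 0 + b 2) = b 0 + b 2 := by rw [map_add, hf0, hf2]; module
      refine ⟨G, ?_, ?_⟩
      · rintro U ⟨hU, hUne⟩
        rw [hG]
        simp only [Set.mem_insert_iff, Set.mem_singleton_iff] at hU
        rcases hU with rfl | rfl | rfl | rfl | rfl
        · rw [hL1', Submodule.map_span, Set.image_singleton, hf0,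
            span_singleton_smul_eq ht0.isUnit]
        · rw [hL2', Submodule.map_span, Set.image_singleton, hf1]
        · exact absurd (Set.mem_singleton U) hUne
        · rw [hP1', Submodule.map_span, Set.image_pair, hf0, hfw1]
          refine span_pair_eq_of (mem_span_pair.2 ⟨t, 0, by module⟩)
            (mem_span_pair.2 ⟨1-t, 1, by module⟩)
            (mem_span_pair.2 ⟨t⁻¹, 0, by match_scalars <;> field_simp <;> ring⟩)
            (mem_span_pair.2 ⟨(t-1) * t⁻¹, 1, by match_scalars <;> field_simp <;> ring⟩)
        · rw [hP2', Submodule.map_span, Set.image_pair, hf1, hfw2]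
      · rw [hG, hL3', Submodule.map_span, Set.image_singleton, hf2]
        intro hEq
        have hm : (1-t) • b 0 + b 2 ∈ span F {b 2} := hEq ▸ mem_span_singleton_self _
        have hr := reprL b 2 hm (show (0 : Fin 3) ≠ 2 by decide)
        simp [map_add, _root_.map_smul, Module.Basis.repr_self, Finsupp.single_apply,
          sub_eq_zero] at hr
        exact ht1 hr.symm
    · -- move P₁
      obtain ⟨G, hG⟩ := exists_gl' (b.constr F ![b 0, t • b 1, b 2])
        (b.constr F ![b 0, t⁻¹ • b 1, b 2])
        (by apply comp_id_of b <;>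
          simp only [Module.Basis.constr_basis, map_add, _root_.map_smul, Matrix.cons_val_zero,
            Matrix.cons_val_one, Matrix.head_cons, Matrix.cons_val_two, Matrix.tail_cons] <;>
          match_scalars <;> field_simp <;> ring)
        (by apply comp_id_of b <;>
          simp only [Module.Basis.constr_basis, map_add, _root_.map_smul, Matrix.cons_val_zero,
            Matrix.cons_val_one, Matrix.head_cons, Matrix.cons_val_two, Matrix.tail_cons] <;>
          match_scalars <;> field_simp <;> ring)
      set f := b.constr F ![b 0, t • b 1, b 2] with hfdef
      have hf0 : f (b 0) = b 0 := by rw [hfdef]; simp [Module.Basis.constr_basis]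
      have hf1 : f (b 1) = t • b 1 := by rw [hfdef]; simp [Module.Basis.constr_basis]
      have hf2 : f (b 2) = b 2 := by rw [hfdef]; simp [Module.Basis.constr_basis]
      have hfw1 : f (b 1 + b 2) = t • b 1 + b 2 := by rw [map_add, hf1, hf2]
      have hfw2 : f (b 0 + b 2) = b 0 + b 2 := by rw [map_add, hf0, hf2]
      refine ⟨G, ?_, ?_⟩
      · rintro U ⟨hU, hUne⟩
        rw [hG]
        simp only [Set.mem_insert_iff, Set.mem_singleton_iff] at hU
        rcases hU with rfl | rfl | rfl | rfl | rfl
        · rw [hL1', Submodule.map_span, Set.image_singleton, hf0]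
        · rw [hL2', Submodule.map_span, Set.image_singleton, hf1,
            span_singleton_smul_eq ht0.isUnit]
        · rw [hL3', Submodule.map_span, Set.image_singleton, hf2]
        · exact absurd (Set.mem_singleton U) hUne
        · rw [hP2', Submodule.map_span, Set.image_pair, hf1, hfw2]
          refine span_pair_eq_of (mem_span_pair.2 ⟨t, 0, by module⟩)
            (mem_span_pair.2 ⟨0, 1, by module⟩)
            (mem_span_pair.2 ⟨t⁻¹, 0, by match_scalars <;> field_simp <;> ring⟩)
            (mem_span_pair.2 ⟨0, 1, by module⟩)
      · rw [hG, hP1', Submodule.map_span, Set.image_pair, hf0, hfw1]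
        intro hEq
        have hm : t • b 1 + b 2 ∈ span F {b 0, b 1 + b 2} := by
          rw [← hEq]
          exact subset_span (by simp)
        have hr := reprP1 b hm
        simp [map_add, _root_.map_smul, Module.Basis.repr_self, Finsupp.single_apply] at hr
        exact ht1 hr
    · -- move P₂
      obtain ⟨G, hG⟩ := exists_gl' (b.constr F ![t • b 0, b 1, b 2])
        (b.constr F ![t⁻¹ • b 0, b 1, b 2])
        (by apply comp_id_of b <;>
          simp only [Module.Basis.constr_basis, map_add, _root_.map_smul, Matrix.cons_val_zero,
            Matrix.cons_val_one, Matrix.head_cons, Matrix.cons_val_two, Matrix.tail_cons] <;>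
          match_scalars <;> field_simp <;> ring)
        (by apply comp_id_of b <;>
          simp only [Module.Basis.constr_basis, map_add, _root_.map_smul, Matrix.cons_val_zero,
            Matrix.cons_val_one, Matrix.head_cons, Matrix.cons_val_two, Matrix.tail_cons] <;>
          match_scalars <;> field_simp <;> ring)
      set f := b.constr F ![t • b 0, b 1, b 2] with hfdef
      have hf0 : f (b 0) = t • b 0 := by rw [hfdef]; simp [Module.Basis.constr_basis]
      have hf1 : f (b 1) = b 1 := by rw [hfdef]; simp [Module.Basis.constr_basis]
      have hf2 : f (b 2) = b 2 := by rw [hfdef]; simp [Module.Basis.constr_basis]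
      have hfw1 : f (b 1 + b 2) = b 1 + b 2 := by rw [map_add, hf1, hf2]
      have hfw2 : f (b 0 + b 2) = t • b 0 + b 2 := by rw [map_add, hf0, hf2]
      refine ⟨G, ?_, ?_⟩
      · rintro U ⟨hU, hUne⟩
        rw [hG]
        simp only [Set.mem_insert_iff, Set.mem_singleton_iff] at hU
        rcases hU with rfl | rfl | rfl | rfl | rfl
        · rw [hL1', Submodule.map_span, Set.image_singleton, hf0,
            span_singleton_smul_eq ht0.isUnit]
        · rw [hL2', Submodule.map_span, Set.image_singleton, hf1]
        · rw [hL3', Submodule.map_span, Set.image_singleton, hf2]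
        · rw [hP1', Submodule.map_span, Set.image_pair, hf0, hfw1]
          refine span_pair_eq_of (mem_span_pair.2 ⟨t, 0, by module⟩)
            (mem_span_pair.2 ⟨0, 1, by module⟩)
            (mem_span_pair.2 ⟨t⁻¹, 0, by match_scalars <;> field_simp <;> ring⟩)
            (mem_span_pair.2 ⟨0, 1, by module⟩)
        · exact absurd (Set.mem_singleton U) hUne
      · rw [hG, hP2', Submodule.map_span, Set.image_pair, hf1, hfw2]
        intro hEq
        have hm : t • b 0 + b 2 ∈ span F {b 1, b 0 + b 2} := by
          rw [← hEq]
          exact subset_span (by simp)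
        have := reprP2 b hm
        simp [map_add, _root_.map_smul, Module.Basis.repr_self, Finsupp.single_apply] at this
        exact ht1 this
  · rw [Set.ncard_insert_of_notMem (by
        simp only [Set.mem_insert_iff, Set.mem_singleton_iff, not_or]
        exact ⟨d12, d13, dLP L₁ P₁ hL₁r hP₁r, dLP L₁ P₂ hL₁r hP₂r⟩) (Set.toFinite _),
      Set.ncard_insert_of_notMem (by
        simp only [Set.mem_insert_iff, Set.mem_singleton_iff, not_or]
        exact ⟨d23, dLP L₂ P₁ hL₂r hP₁r, dLP L₂ P₂ hL₂r hP₂r⟩) (Set.toFinite _),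
      Set.ncard_insert_of_notMem (by
        simp only [Set.mem_insert_iff, Set.mem_singleton_iff, not_or]
        exact ⟨dLP L₃ P₁ hL₃r hP₁r, dLP L₃ P₂ hL₃r hP₂r⟩) (Set.toFinite _),
      Set.ncard_pair dP]
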